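/- Let x ∈ ℝ², l > 0, let p = (p₁,p₂) be an integer pair with 0 ≤ p₁ ≤ p₂, and let k ≥ 0 be an integer. Then for n = 4k one has I_p(f_n^x, x, l) = (1/(4k+2)!) · T_p^(k) · (l/2)^{4k}. -/

import Mathlib

open MeasureTheory Real Filter Topology

noncomputable section

/-- The `l`-square centered at `x`. -/
def Dsq (x : ℝ × ℝ) (l : ℝ) : Set (ℝ × ℝ) :=
  Set.Icc (x.1 - l / 2) (x.1 + l / 2) ×ˢ Set.Icc (x.2 - l / 2) (x.2 + l / 2)

/-- `I(f,x,l)`: the average of `f` over the `l`-square centered at `x`. -/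
def Iavg (f : ℝ × ℝ → ℝ) (x : ℝ × ℝ) (l : ℝ) : ℝ :=
  (1 / l ^ 2) * ∫ ξ in Dsq x l, f ξ

/-- `D(x',l)` is a `p`-neighbor of `D(x,l)`. -/
def isNbr (p : ℤ × ℤ) (l : ℝ) (x x' : ℝ × ℝ) : Prop :=
  (|x'.1 - x.1| = (p.1 : ℝ) * l ∧ |x'.2 - x.2| = (p.2 : ℝ) * l) ∨
    (|x'.1 - x.1| = (p.2 : ℝ) * l ∧ |x'.2 - x.2| = (p.1 : ℝ) * l)

/-- `I_p(f,x,l)`: sum of averages over all `p`-neighbors of `D(x,l)`. -/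
def Ipavg (f : ℝ × ℝ → ℝ) (p : ℤ × ℤ) (x : ℝ × ℝ) (l : ℝ) : ℝ :=
  ∑ᶠ x' ∈ {x' : ℝ × ℝ | isNbr p l x x'}, Iavg f x' l

/-- The constant `c_p` (for integer pairs with `0 ≤ p₁ ≤ p₂`). -/
def cP (p : ℤ × ℤ) : ℝ :=
  if p.1 = 0 ∧ p.2 = 0 then 1 / 8 else if p.1 = 0 ∨ p.1 = p.2 then 1 / 2 else 1

/-- The constant `T_p^(k)`. -/
def Tc (p : ℤ × ℤ) (k : ℕ) : ℝ :=
  2 * cP p *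
    (((2 * (p.1 : ℂ) + 1) + (2 * (p.2 : ℂ) + 1) * Complex.I) ^ (4 * k + 2)
      - ((2 * (p.1 : ℂ) - 1) + (2 * (p.2 : ℂ) + 1) * Complex.I) ^ (4 * k + 2)
      + ((2 * (p.1 : ℂ) - 1) + (2 * (p.2 : ℂ) - 1) * Complex.I) ^ (4 * k + 2)
      - ((2 * (p.1 : ℂ) + 1) + (2 * (p.2 : ℂ) - 1) * Complex.I) ^ (4 * k + 2)).im

/-- The polynomial harmonic function `f_n^x`. -/
def fP (x : ℝ × ℝ) (n : ℕ) (ξ : ℝ × ℝ) : ℝ :=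
  ∑ j ∈ Finset.range (n / 2 + 1),
    (-1 : ℝ) ^ j * (ξ.1 - x.1) ^ (n - 2 * j) * (ξ.2 - x.2) ^ (2 * j) /
      (((n - 2 * j).factorial : ℝ) * ((2 * j).factorial : ℝ))

/-- The polynomial harmonic function `g_n^x`. -/
def gP (x : ℝ × ℝ) (n : ℕ) (ξ : ℝ × ℝ) : ℝ :=
  ∑ j ∈ Finset.range ((n - 1) / 2 + 1),
    (-1 : ℝ) ^ j * (ξ.1 - x.1) ^ (n - 2 * j - 1) * (ξ.2 - x.2) ^ (2 * j + 1) /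
      (((n - 2 * j - 1).factorial : ℝ) * ((2 * j + 1).factorial : ℝ))

/-- Partial derivative in the first coordinate. -/
def pd1 (f : ℝ × ℝ → ℝ) (y : ℝ × ℝ) : ℝ := fderiv ℝ f y (1, 0)

/-- Partial derivative in the second coordinate. -/
def pd2 (f : ℝ × ℝ → ℝ) (y : ℝ × ℝ) : ℝ := fderiv ℝ f y (0, 1)

/-- `h` is harmonic on the open set `Ω`. -/
def HarmonicOn (h : ℝ × ℝ → ℝ) (Ω : Set (ℝ × ℝ)) : Prop :=
  ContDiffOn ℝ 2 h Ω ∧ ∀ y ∈ Ω, pd1 (pd1 h) y + pd2 (pd2 h) y = 0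

/-- `‖𝒫‖ = max_{p ∈ 𝒫} ‖2p+(1,1)‖`. -/
def PNorm (P : Finset (ℤ × ℤ)) : ℝ :=
  sSup ((fun p : ℤ × ℤ =>
    Real.sqrt ((2 * (p.1 : ℝ) + 1) ^ 2 + (2 * (p.2 : ℝ) + 1) ^ 2)) '' ↑P)

/-- The four corners of the unit square. -/
def qv : Fin 4 → ℝ × ℝ := ![(0, 0), (1, 0), (1, 1), (0, 1)]

/-- The contraction `F_i(x) = (x + q_i)/2`. -/
def Fc (i : Fin 4) (x : ℝ × ℝ) : ℝ × ℝ := ((x.1 + (qv i).1) / 2, (x.2 + (qv i).2) / 2)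

/-- `F_w = F_{w₁} ∘ ⋯ ∘ F_{w_m}` for a word `w` of length `m`. -/
def Fword {m : ℕ} (w : Fin m → Fin 4) : ℝ × ℝ → ℝ × ℝ :=
  (List.ofFn w).foldr (fun i acc => Fc i ∘ acc) id

/-- The center of the `m`-cell `F_w S`. -/
def cellCtr {m : ℕ} (w : Fin m → Fin 4) : ℝ × ℝ := Fword w (1 / 2, 1 / 2)

/-- `B_w(f)`: the average of `f` over the `m`-cell `F_w S` (a dyadic square of
side length `2⁻ᵐ` centered at `cellCtr w`). -/
def Bav (f : ℝ × ℝ → ℝ) {m : ℕ} (w : Fin m → Fin 4) : ℝ :=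
  Iavg f (cellCtr w) ((1 / 2) ^ m)
section AuxStmt0
open Finset Complex MeasureTheory

lemma aux_Ipow_im_even (j : ℕ) : (Complex.I ^ (2*j)).im = 0 := by
  rw [pow_mul, Complex.I_sq]
  rcases neg_one_pow_eq_or ℂ j with h | h <;> simp [h]

lemma aux_Ipow_im_odd (j : ℕ) : (Complex.I ^ (2*j+1)).im = (-1:ℝ)^j := by
  rw [pow_succ, pow_mul, Complex.I_sq]
  rcases Nat.even_or_odd j with h | h
  · rw [h.neg_one_pow]; simp [h.neg_one_pow]
  · rw [h.neg_one_pow]; simp [h.neg_one_pow]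

lemma aux_im_pow (u v : ℝ) (k : ℕ) :
    (((u:ℂ) + v*Complex.I)^(4*k+2)).im
      = ∑ j ∈ range (2*k+1), (-1:ℝ)^j * ((4*k+2).choose (2*j+1)) * u^(4*k+1-2*j) * v^(2*j+1) := by
  have hexp : ((u:ℂ) + v*Complex.I)^(4*k+2)
      = ∑ m ∈ range (4*k+3), (u:ℂ)^(4*k+2-m) * (v:ℂ)^m * Complex.I^m * ((4*k+2).choose m) := by
    rw [add_pow, ← Finset.sum_range_reflect]
    refine Finset.sum_congr rfl fun m hm => ?_
    simp only [mem_range] at hm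
    rw [show 4*k+3-1-m = 4*k+2-m by omega, Nat.choose_symm (by omega),
      show 4*k+2-(4*k+2-m) = m by omega, mul_pow]
    ring
  have him : (((u:ℂ) + v*Complex.I)^(4*k+2)).im
      = ∑ m ∈ range (4*k+3), u^(4*k+2-m) * v^m * (Complex.I^m).im * ((4*k+2).choose m) := by
    rw [hexp, Complex.im_sum]
    refine Finset.sum_congr rfl fun m _ => ?_
    have : (u:ℂ)^(4*k+2-m) * (v:ℂ)^m * Complex.I^m * ((4*k+2).choose m)
        = (((u^(4*k+2-m) * v^m * ((4*k+2).choose m) : ℝ)):ℂ) * Complex.I^m := by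
      push_cast; ring
    rw [this, Complex.mul_im]
    simp only [Complex.ofReal_re, Complex.ofReal_im, zero_mul, add_zero]
    ring
  rw [him]
  rw [show range (4*k+3) = (range (2*k+1)).image (fun j => 2*j+1)
        ∪ ((range (4*k+3)).filter (fun m => Even m)) from ?_]
  · rw [Finset.sum_union ?disj]
    case disj =>
      rw [Finset.disjoint_left]
      rintro m hm hm'
      simp only [mem_image, mem_range] at hm
      obtain ⟨j, _, rfl⟩ := hm
      simp only [mem_filter] at hm'
      have := hm'.2
      rw [Nat.even_iff] at this; omega
    have h2 : ∑ m ∈ (range (4*k+3)).filter (fun m => Even m),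
        u^(4*k+2-m) * v^m * (Complex.I^m).im * ((4*k+2).choose m) = 0 := by
      refine Finset.sum_eq_zero fun m hm => ?_
      simp only [mem_filter] at hm
      obtain ⟨j, rfl⟩ := hm.2
      rw [show j + j = 2*j by ring, aux_Ipow_im_even]; ring
    rw [h2, add_zero, Finset.sum_image (by intro a _ b _ h; have h' : 2*a+1 = 2*b+1 := h; omega)]
    refine Finset.sum_congr rfl fun j hj => ?_
    simp only [mem_range] at hj
    rw [aux_Ipow_im_odd, show 4*k+2-(2*j+1) = 4*k+1-2*j by omega]
    ring
  · ext m
    simp only [mem_union, mem_image, mem_range, mem_filter]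
    constructor
    · intro hm
      rcases Nat.even_or_odd m with h | h
      · exact Or.inr ⟨hm, h⟩
      · obtain ⟨j, rfl⟩ := h
        exact Or.inl ⟨j, by omega, rfl⟩
    · rintro (⟨j, hj, rfl⟩ | ⟨hm, _⟩) <;> omega

lemma aux_int1 (a b c : ℝ) (h : a ≤ b) (m : ℕ) :
    ∫ u in Set.Icc a b, (u - c)^m = ((b-c)^(m+1) - (a-c)^(m+1))/(m+1) := by
  rw [MeasureTheory.integral_Icc_eq_integral_Ioc, ← intervalIntegral.integral_of_le h,
    intervalIntegral.integral_comp_sub_right (fun u => u ^ m) c, integral_pow]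

lemma aux_Iavg_fP_gen (x : ℝ × ℝ) (l : ℝ) (hl : 0 < l) (c : ℝ × ℝ) (n : ℕ) :
    Iavg (fP x n) c l = (1/l^2) * ∑ j ∈ range (n/2+1),
      ((-1:ℝ)^j / (((n-2*j).factorial : ℝ) * ((2*j).factorial : ℝ)))
        * (((c.1+l/2-x.1)^(n-2*j+1) - (c.1-l/2-x.1)^(n-2*j+1))/(n-2*j+1))
        * (((c.2+l/2-x.2)^(2*j+1) - (c.2-l/2-x.2)^(2*j+1))/(2*j+1)) := by
  have hle1 : c.1 - l/2 ≤ c.1 + l/2 := by linarith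
  have hle2 : c.2 - l/2 ≤ c.2 + l/2 := by linarith
  unfold Iavg fP Dsq
  congr 1
  rw [integral_finset_sum]
  · refine Finset.sum_congr rfl fun j hj => ?_
    have hrw : ∀ ξ : ℝ × ℝ, (-1 : ℝ) ^ j * (ξ.1 - x.1) ^ (n - 2 * j) * (ξ.2 - x.2) ^ (2 * j) /
          (((n - 2 * j).factorial : ℝ) * ((2 * j).factorial : ℝ))
        = (fun u => ((-1:ℝ)^j / (((n-2*j).factorial : ℝ) * ((2*j).factorial : ℝ))) * (u - x.1) ^ (n - 2*j)) ξ.1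
          * (fun v => (v - x.2) ^ (2*j)) ξ.2 := by
      intro ξ; ring
    rw [MeasureTheory.Measure.volume_eq_prod]
    have key := MeasureTheory.setIntegral_prod_mul (μ := (volume : Measure ℝ))
      (ν := (volume : Measure ℝ))
      (f := fun u => ((-1:ℝ)^j / (((n-2*j).factorial : ℝ) * ((2*j).factorial : ℝ))) * (u - x.1) ^ (n - 2*j))
      (g := fun v => (v - x.2) ^ (2*j))
      (Set.Icc (c.1 - l/2) (c.1 + l/2)) (Set.Icc (c.2 - l/2) (c.2 + l/2))
    have h2j : 2*j ≤ n := by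
      simp only [mem_range] at hj; omega
    refine Eq.trans ?_ (key.trans ?_)
    · exact MeasureTheory.setIntegral_congr_fun (measurableSet_Icc.prod measurableSet_Icc)
        (fun ξ _ => hrw ξ)
    · rw [MeasureTheory.integral_const_mul, aux_int1 _ _ _ hle1, aux_int1 _ _ _ hle2]
      push_cast [Nat.cast_sub h2j]
      ring
  · intro j hj
    exact (by fun_prop : Continuous fun ξ : ℝ × ℝ =>
      (-1 : ℝ) ^ j * (ξ.1 - x.1) ^ (n - 2 * j) * (ξ.2 - x.2) ^ (2 * j) /
        (((n - 2 * j).factorial : ℝ) * ((2 * j).factorial : ℝ))).locallyIntegrable.integrableOn_isCompact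
      (isCompact_Icc.prod isCompact_Icc)

/-- Corner alternating imaginary part. -/
noncomputable def ImD (k : ℕ) (a b : ℝ) : ℝ :=
  ((((2*a+1:ℝ):ℂ) + ((2*b+1:ℝ):ℂ)*Complex.I)^(4*k+2)
    - (((2*a-1:ℝ):ℂ) + ((2*b+1:ℝ):ℂ)*Complex.I)^(4*k+2)
    + (((2*a-1:ℝ):ℂ) + ((2*b-1:ℝ):ℂ)*Complex.I)^(4*k+2)
    - (((2*a+1:ℝ):ℂ) + ((2*b-1:ℝ):ℂ)*Complex.I)^(4*k+2)).im

lemma aux_ImD_sum (k : ℕ) (a b : ℝ) :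
    ImD k a b = ∑ j ∈ range (2*k+1),
      (-1:ℝ)^j * ((4*k+2).choose (2*j+1))
        * ((2*a+1)^(4*k+1-2*j) - (2*a-1)^(4*k+1-2*j))
        * ((2*b+1)^(2*j+1) - (2*b-1)^(2*j+1)) := by
  unfold ImD
  rw [Complex.sub_im, Complex.add_im, Complex.sub_im, aux_im_pow, aux_im_pow, aux_im_pow,
    aux_im_pow, ← Finset.sum_sub_distrib, ← Finset.sum_add_distrib, ← Finset.sum_sub_distrib]
  exact Finset.sum_congr rfl fun j _ => by ring

lemma aux_ImD_neg_left (k : ℕ) (a b : ℝ) : ImD k (-a) b = ImD k a b := by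
  rw [aux_ImD_sum, aux_ImD_sum]
  refine Finset.sum_congr rfl fun j hj => ?_
  simp only [mem_range] at hj
  have hodd : Odd (4*k+1-2*j) := by rw [Nat.odd_iff]; omega
  rw [show 2*(-a)+1 = -(2*a-1) by ring, show 2*(-a)-1 = -(2*a+1) by ring,
    hodd.neg_pow, hodd.neg_pow]
  ring

lemma aux_ImD_neg_right (k : ℕ) (a b : ℝ) : ImD k a (-b) = ImD k a b := by
  rw [aux_ImD_sum, aux_ImD_sum]
  refine Finset.sum_congr rfl fun j hj => ?_
  have hodd : Odd (2*j+1) := by rw [Nat.odd_iff]; omega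
  rw [show 2*(-b)+1 = -(2*b-1) by ring, show 2*(-b)-1 = -(2*b+1) by ring,
    hodd.neg_pow, hodd.neg_pow]
  ring

lemma aux_ImD_swap (k : ℕ) (a b : ℝ) : ImD k b a = ImD k a b := by
  have hI : Complex.I ^ (4*k+2) = -1 := by
    rw [pow_add, pow_mul, Complex.I_pow_four, one_pow, Complex.I_sq, one_mul]
  have key : ∀ w : ℂ, (Complex.I * (starRingEnd ℂ) w)^(4*k+2)
      = -((starRingEnd ℂ) (w^(4*k+2))) := by
    intro w
    rw [mul_pow, ← map_pow, hI]
    ring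
  have corner : ∀ u v : ℝ, ((v:ℂ) + (u:ℂ)*Complex.I)
      = Complex.I * (starRingEnd ℂ) ((u:ℂ) + (v:ℂ)*Complex.I) := by
    intro u v
    simp [Complex.ext_iff]
  unfold ImD
  rw [corner (2*a+1) (2*b+1), corner (2*a+1) (2*b-1), corner (2*a-1) (2*b-1),
    corner (2*a-1) (2*b+1), key, key, key, key]
  simp only [Complex.sub_im, Complex.add_im, Complex.neg_im, Complex.conj_im]
  ring

lemma aux_Iavg_offset (x : ℝ × ℝ) (l : ℝ) (hl : 0 < l) (a b : ℝ) (k : ℕ) :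
    Iavg (fP x (4*k)) (x.1 + a*l, x.2 + b*l) l
      = (l/2)^(4*k) / (4*((4*k+2).factorial)) * ImD k a b := by
  rw [aux_Iavg_fP_gen x l hl _ (4*k), aux_ImD_sum, Finset.mul_sum, Finset.mul_sum]
  rw [show 4*k/2+1 = 2*k+1 by omega]
  refine Finset.sum_congr rfl fun j hj => ?_
  simp only [mem_range] at hj
  obtain ⟨e, he⟩ : ∃ e, 4*k - 2*j = e := ⟨_, rfl⟩
  have he1 : 4*k+1-2*j = e+1 := by omega
  have he2 : 4*k = e + 2*j := by omega
  rw [he, he1, he2]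
  have hU1 : x.1+a*l+l/2-x.1 = (2*a+1)*(l/2) := by ring
  have hU2 : x.1+a*l-l/2-x.1 = (2*a-1)*(l/2) := by ring
  have hV1 : x.2+b*l+l/2-x.2 = (2*b+1)*(l/2) := by ring
  have hV2 : x.2+b*l-l/2-x.2 = (2*b-1)*(l/2) := by ring
  have hden : ((e+2*j : ℕ):ℝ) - 2*(j:ℝ) + 1 = (e:ℝ) + 1 := by
    push_cast; ring
  simp only []
  rw [hU1, hU2, hV1, hV2, hden]
  have hch : ((e+2*j+2).choose (2*j+1) : ℝ) * ((2*j+1).factorial : ℝ) * ((e+1).factorial : ℝ)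
      = ((e+2*j+2).factorial : ℝ) := by
    rw [← Nat.cast_mul, ← Nat.cast_mul]
    norm_cast
    have := Nat.choose_mul_factorial_mul_factorial
      (show 2*j+1 ≤ e+2*j+2 by omega) (n := e+2*j+2)
    rw [show e+2*j+2-(2*j+1) = e+1 by omega] at this
    linarith [this]
  have hfe : ((e+1).factorial : ℝ) = (e+1) * (e.factorial : ℝ) := by
    rw [Nat.factorial_succ]; push_cast; ring
  have hfj : ((2*j+1).factorial : ℝ) = (2*j+1) * ((2*j).factorial : ℝ) := by
    rw [Nat.factorial_succ]; push_cast; ring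
  have hl0 : l ≠ 0 := ne_of_gt hl
  have hfe0 : (e.factorial : ℝ) ≠ 0 := Nat.cast_ne_zero.mpr e.factorial_ne_zero
  have hfj0 : ((2*j).factorial : ℝ) ≠ 0 := Nat.cast_ne_zero.mpr (2*j).factorial_ne_zero
  have he0 : ((e:ℝ)+1) ≠ 0 := by positivity
  have hj0 : (2*(j:ℝ)+1) ≠ 0 := by positivity
  have hC0 : (((e+2*j+2).choose (2*j+1) : ℕ) : ℝ) ≠ 0 :=
    Nat.cast_ne_zero.mpr (Nat.choose_pos (by omega)).ne'
  rw [mul_pow, mul_pow, mul_pow, mul_pow]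
  rw [← hch, hfe, hfj]
  field_simp
  ring

lemma aux_Tc_eq (p : ℤ × ℤ) (k : ℕ) : Tc p k = 2 * cP p * ImD k (p.1:ℝ) (p.2:ℝ) := by
  unfold Tc ImD
  norm_num

end AuxStmt0

section MainStmt0
open Finset Complex MeasureTheory

lemma aux_nbr_set (x : ℝ × ℝ) (l : ℝ) (hl : 0 < l) (p : ℤ × ℤ)
    (hp1 : 0 ≤ p.1) (hp2 : p.1 ≤ p.2) :
    {x' : ℝ × ℝ | isNbr p l x x'}
      = ↑((({(p.1, p.2), (p.1, -p.2), (-p.1, p.2), (-p.1, -p.2),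
            (p.2, p.1), (p.2, -p.1), (-p.2, p.1), (-p.2, -p.1)} : Finset (ℤ × ℤ)).image
          (fun q : ℤ × ℤ => ((x.1 + (q.1:ℝ)*l, x.2 + (q.2:ℝ)*l) : ℝ × ℝ)))) := by
  have hP1 : (0:ℝ) ≤ (p.1:ℝ)*l := by
    have : (0:ℝ) ≤ (p.1:ℝ) := by exact_mod_cast hp1
    positivity
  have hP2 : (0:ℝ) ≤ (p.2:ℝ)*l := by
    have : (0:ℝ) ≤ (p.2:ℝ) := by exact_mod_cast le_trans hp1 hp2
    positivity
  ext x'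
  simp only [Set.mem_setOf_eq, Finset.coe_image, Set.mem_image, Finset.mem_coe,
    Finset.mem_insert, Finset.mem_singleton]
  have mk_eq : ∀ q r : ℤ, x'.1 - x.1 = (q:ℝ)*l → x'.2 - x.2 = (r:ℝ)*l →
      ((x.1 + (q:ℝ)*l, x.2 + (r:ℝ)*l) : ℝ × ℝ) = x' := by
    intro q r h1 h2
    rw [Prod.ext_iff]
    constructor <;> simp <;> linarith
  constructor
  · rintro (⟨h1, h2⟩ | ⟨h1, h2⟩)
    · rw [abs_eq hP1] at h1
      rw [abs_eq hP2] at h2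
      rcases h1 with h1 | h1 <;> rcases h2 with h2 | h2
      · exact ⟨(p.1, p.2), by tauto, mk_eq _ _ h1 h2⟩
      · exact ⟨(p.1, -p.2), by tauto, mk_eq _ _ (by push_cast; linarith) (by push_cast; linarith)⟩
      · exact ⟨(-p.1, p.2), by tauto, mk_eq _ _ (by push_cast; linarith) (by push_cast; linarith)⟩
      · exact ⟨(-p.1, -p.2), by tauto, mk_eq _ _ (by push_cast; linarith) (by push_cast; linarith)⟩
    · rw [abs_eq hP2] at h1
      rw [abs_eq hP1] at h2
      rcases h1 with h1 | h1 <;> rcases h2 with h2 | h2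
      · exact ⟨(p.2, p.1), by tauto, mk_eq _ _ h1 h2⟩
      · exact ⟨(p.2, -p.1), by tauto, mk_eq _ _ (by push_cast; linarith) (by push_cast; linarith)⟩
      · exact ⟨(-p.2, p.1), by tauto, mk_eq _ _ (by push_cast; linarith) (by push_cast; linarith)⟩
      · exact ⟨(-p.2, -p.1), by tauto, mk_eq _ _ (by push_cast; linarith) (by push_cast; linarith)⟩
  · rintro ⟨q, hq, rfl⟩
    have habs1 : ∀ t : ℝ, |x.1 + t - x.1| = |t| := by intro t; rw [add_sub_cancel_left]
    have habs2 : ∀ t : ℝ, |x.2 + t - x.2| = |t| := by intro t; rw [add_sub_cancel_left]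
    unfold isNbr
    rcases hq with rfl | rfl | rfl | rfl | rfl | rfl | rfl | rfl <;>
      simp only [habs1, habs2] <;> push_cast <;>
      [left; left; left; left; right; right; right; right] <;>
      constructor <;>
      (try simp only [neg_mul, abs_neg]) <;>
      [exact abs_of_nonneg hP1; exact abs_of_nonneg hP2; exact abs_of_nonneg hP1;
       exact abs_of_nonneg hP2; exact abs_of_nonneg hP1; exact abs_of_nonneg hP2;
       exact abs_of_nonneg hP1; exact abs_of_nonneg hP2; exact abs_of_nonneg hP2;
       exact abs_of_nonneg hP1; exact abs_of_nonneg hP2; exact abs_of_nonneg hP1;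
       exact abs_of_nonneg hP2; exact abs_of_nonneg hP1; exact abs_of_nonneg hP2;
       exact abs_of_nonneg hP1]

theorem stmt0' (x : ℝ × ℝ) (l : ℝ) (hl : 0 < l) (p : ℤ × ℤ)
    (hp1 : 0 ≤ p.1) (hp2 : p.1 ≤ p.2) (k : ℕ) :
    Ipavg (fP x (4 * k)) p x l =
      (1 / ((4 * k + 2).factorial : ℝ)) * Tc p k * (l / 2) ^ (4 * k) := by
  have hl0 : l ≠ 0 := ne_of_gt hl
  set Q : Finset (ℤ × ℤ) := {(p.1, p.2), (p.1, -p.2), (-p.1, p.2), (-p.1, -p.2),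
      (p.2, p.1), (p.2, -p.1), (-p.2, p.1), (-p.2, -p.1)} with hQ
  have hinj : ∀ q ∈ Q, ∀ q' ∈ Q,
      ((x.1 + (q.1:ℝ)*l, x.2 + (q.2:ℝ)*l) : ℝ × ℝ)
        = (x.1 + (q'.1:ℝ)*l, x.2 + (q'.2:ℝ)*l) → q = q' := by
    intro q _ q' _ h
    rw [Prod.ext_iff] at h ⊢
    obtain ⟨h1, h2⟩ := h
    simp only [add_right_inj] at h1 h2
    constructor
    · exact_mod_cast mul_right_cancel₀ hl0 h1
    · exact_mod_cast mul_right_cancel₀ hl0 h2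
  rw [Ipavg, aux_nbr_set x l hl p hp1 hp2, finsum_mem_coe_finset, Finset.sum_image hinj]
  have hval : ∀ q ∈ Q, Iavg (fP x (4*k)) ((x.1 + (q.1:ℝ)*l, x.2 + (q.2:ℝ)*l) : ℝ × ℝ) l
      = (l/2)^(4*k) / (4*((4*k+2).factorial)) * ImD k (p.1:ℝ) (p.2:ℝ) := by
    intro q hq
    rw [aux_Iavg_offset x l hl _ _ k]
    congr 1
    rw [hQ] at hq
    simp only [Finset.mem_insert, Finset.mem_singleton] at hq
    rcases hq with rfl | rfl | rfl | rfl | rfl | rfl | rfl | rfl <;> push_cast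
    · rfl
    · rw [aux_ImD_neg_right]
    · rw [aux_ImD_neg_left]
    · rw [aux_ImD_neg_left, aux_ImD_neg_right]
    · rw [aux_ImD_swap]
    · rw [aux_ImD_neg_right, aux_ImD_swap]
    · rw [aux_ImD_neg_left, aux_ImD_swap]
    · rw [aux_ImD_neg_left, aux_ImD_neg_right, aux_ImD_swap]
  rw [Finset.sum_congr rfl hval, Finset.sum_const, nsmul_eq_mul]
  have hfac0 : (((4*k+2).factorial : ℕ) : ℝ) ≠ 0 :=
    Nat.cast_ne_zero.mpr (4*k+2).factorial_ne_zero
  have hcard : (Q.card : ℝ) = 8 * cP p := by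
    obtain ⟨p1, p2⟩ := p
    simp only at hp1 hp2
    by_cases h1 : p1 = 0
    · subst h1
      by_cases h2 : p2 = 0
      · subst h2
        have : Q = {((0:ℤ), (0:ℤ))} := by
          rw [hQ]; ext q; simp
        rw [this]
        norm_num [cP]
      · have hp2' : 0 < p2 := lt_of_le_of_ne hp2 (Ne.symm h2)
        have : Q = {((0:ℤ), p2), ((0:ℤ), -p2), (p2, (0:ℤ)), (-p2, (0:ℤ))} := by
          rw [hQ]; ext q; simp [Prod.ext_iff]; try omega
        rw [this, Finset.card_insert_of_notMem (by simp [Prod.ext_iff]; try omega),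
          Finset.card_insert_of_notMem (by simp [Prod.ext_iff]; try omega),
          Finset.card_insert_of_notMem (by simp [Prod.ext_iff]; try omega),
          Finset.card_singleton]
        norm_num [cP, h2]
    · have hp1' : 0 < p1 := lt_of_le_of_ne hp1 (Ne.symm h1)
      by_cases h2 : p1 = p2
      · subst h2
        have : Q = {(p1, p1), (p1, -p1), (-p1, p1), (-p1, -p1)} := by
          rw [hQ]; ext q; simp [Prod.ext_iff]; try omega
        rw [this, Finset.card_insert_of_notMem (by simp [Prod.ext_iff]; try omega),
          Finset.card_insert_of_notMem (by simp [Prod.ext_iff]; try omega),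
          Finset.card_insert_of_notMem (by simp [Prod.ext_iff]; try omega),
          Finset.card_singleton]
        norm_num [cP, h1]
      · have hp2' : p1 < p2 := lt_of_le_of_ne hp2 h2
        rw [hQ, Finset.card_insert_of_notMem (by simp [Prod.ext_iff]; try omega),
          Finset.card_insert_of_notMem (by simp [Prod.ext_iff]; try omega),
          Finset.card_insert_of_notMem (by simp [Prod.ext_iff]; try omega),
          Finset.card_insert_of_notMem (by simp [Prod.ext_iff]; try omega),
          Finset.card_insert_of_notMem (by simp [Prod.ext_iff]; try omega),
          Finset.card_insert_of_notMem (by simp [Prod.ext_iff]; try omega),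
          Finset.card_insert_of_notMem (by simp [Prod.ext_iff]; try omega),
          Finset.card_singleton]
        norm_num [cP, h1, h2]
  rw [hcard, aux_Tc_eq]
  field_simp
  ring

end MainStmt0

/-- for `n = 4k`, `I_p(f_n^x, x, l) = (1/(4k+2)!) ⬝ T_p^(k) ⬝ (l/2)^{4k}`. -/
theorem stmt0 (x : ℝ × ℝ) (l : ℝ) (hl : 0 < l) (p : ℤ × ℤ)
    (hp1 : 0 ≤ p.1) (hp2 : p.1 ≤ p.2) (k : ℕ) :
    Ipavg (fP x (4 * k)) p x l =
      (1 / ((4 * k + 2).factorial : ℝ)) * Tc p k * (l / 2) ^ (4 * k) := by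
  exact stmt0' x l hl p hp1 hp2 k
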